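/- Let P be a special poset. Then sat*(n, P) = O(n); that is, there exists a constant C (depending only on P) such that sat*(n, P) ≤ C · n for all sufficiently large n. -/

import Mathlib

open Finset Filter

/-- An induced copy of the poset `α` inside the family `𝒜` of subsets of `Fin n`
(representing `[n] = {1,…,n}`): an injective map `f : α → Finset (Fin n)` with image
contained in `𝒜` such that `a ≤ b ↔ f a ⊆ f b`. -/
def IsInducedCopy {α : Type*} [PartialOrder α] {n : ℕ}
    (𝒜 : Finset (Finset (Fin n))) (f : α → Finset (Fin n)) : Prop :=
  Function.Injective f ∧ (∀ a, f a ∈ 𝒜) ∧ ∀ a b : α, a ≤ b ↔ f a ⊆ f b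

/-- The family `𝒜` contains an induced copy of the poset `α`. -/
def ContainsCopy (α : Type*) [PartialOrder α] {n : ℕ}
    (𝒜 : Finset (Finset (Fin n))) : Prop :=
  ∃ f : α → Finset (Fin n), IsInducedCopy 𝒜 f

/-- `𝒜` is an `α`-saturated family: it contains no induced copy of `α`, but adding any
set not in `𝒜` creates an induced copy of `α`. -/
def IsSaturatedFamily (α : Type*) [PartialOrder α] {n : ℕ}
    (𝒜 : Finset (Finset (Fin n))) : Prop :=
  ¬ ContainsCopy α 𝒜 ∧
    ∀ S : Finset (Fin n), S ∉ 𝒜 → ContainsCopy α (insert S 𝒜)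

/-- The induced saturation number `sat*(n, α)`: the minimum size of an `α`-saturated
family of subsets of `[n]`. -/
noncomputable def satStar (α : Type*) [PartialOrder α] (n : ℕ) : ℕ :=
  sInf {k : ℕ | ∃ 𝒜 : Finset (Finset (Fin n)), IsSaturatedFamily α 𝒜 ∧ 𝒜.card = k}

/-- A poset is special if it consists of an element `z` incomparable to every other
element, together with the rest of the poset, which has both a greatest and a least
element. -/
def IsSpecial (α : Type*) [PartialOrder α] : Prop :=
  ∃ z : α, (∀ x : α, x ≠ z → ¬ x ≤ z ∧ ¬ z ≤ x) ∧
    (∃ t : α, t ≠ z ∧ ∀ x : α, x ≠ z → x ≤ t) ∧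
    (∃ b : α, b ≠ z ∧ ∀ x : α, x ≠ z → b ≤ x)

attribute [local instance] Classical.propDecidable

namespace Statement6Aux

lemma containsCopy_mono {α : Type*} [PartialOrder α] {n : ℕ}
    {𝒜 ℬ : Finset (Finset (Fin n))} (h : 𝒜 ⊆ ℬ) (hc : ContainsCopy α 𝒜) :
    ContainsCopy α ℬ := by
  obtain ⟨f, hinj, hmem, hiff⟩ := hc
  exact ⟨f, hinj, fun a => h (hmem a), hiff⟩

variable {P : Type*} [PartialOrder P] [Fintype P]

section Defs

variable (z b : P) (posn : P → ℕ) (K n : ℕ)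

/-- initial segment of `Fin n` of length `j` -/
def Cs (j : ℕ) : Finset (Fin n) := univ.filter (fun v => v.val < j)

/-- gadget set at level `i` corresponding to `x ∈ P`, `x ≠ z` -/
noncomputable def gad (i : ℕ) (x : P) : Finset (Fin n) :=
  univ.filter (fun v => v.val < i ∨ ∃ y, y ≤ x ∧ y ≠ b ∧ y ≠ z ∧ v.val = i + 1 + posn y)

noncomputable def F0 : Finset (Finset (Fin n)) :=
  ((range (n+1)).filter (fun i => (K+1) ∣ i ∧ i + K + 1 ≤ n)).biUnion
    (fun i => (univ.filter (fun x => x ≠ z)).image (gad z b posn n i))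

def Covered (S : Finset (Fin n)) : Prop :=
  ∃ i, ((K+1) ∣ i ∧ i + K + 1 ≤ n) ∧ (∃ p : Fin n, p ∉ S ∧ p.val < i) ∧
    (∃ q ∈ S, i + K + 1 ≤ q.val)

def Small : Finset (Finset (Fin n)) :=
  (range (n+1)).biUnion
    (fun a => ((Cs n (a + (2*K+4))) \ (Cs n a)).powerset.image (fun E => Cs n a ∪ E))

end Defs

section Lemmas

variable {z b : P} {posn : P → ℕ} {K n : ℕ}

lemma mem_Cs {j : ℕ} {v : Fin n} : v ∈ Cs n j ↔ v.val < j := by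
  simp [Cs]

lemma Cs_mono {j j' : ℕ} (h : j ≤ j') : Cs n j ⊆ Cs n j' := by
  intro v hv
  rw [mem_Cs] at hv ⊢
  omega

lemma Cs_univ {j : ℕ} (h : n ≤ j) : Cs n j = univ := by
  apply eq_univ_of_forall
  intro v
  rw [mem_Cs]
  exact lt_of_lt_of_le v.isLt h

lemma mem_gad {i : ℕ} {x : P} {v : Fin n} :
    v ∈ gad z b posn n i x ↔
      (v.val < i ∨ ∃ y, y ≤ x ∧ y ≠ b ∧ y ≠ z ∧ v.val = i + 1 + posn y) := by
  simp [gad]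

lemma Cs_subset_gad {i : ℕ} {x : P} : Cs n i ⊆ gad z b posn n i x := by
  intro v hv
  rw [mem_Cs] at hv
  rw [mem_gad]
  exact Or.inl hv

lemma gad_subset_Cs (hpos : ∀ y, posn y < K) {i : ℕ} {x : P} :
    gad z b posn n i x ⊆ Cs n (i + K + 1) := by
  intro v hv
  rw [mem_gad] at hv
  rw [mem_Cs]
  rcases hv with h | ⟨y, -, -, -, h⟩
  · omega
  · have := hpos y; omega

lemma gad_b (hb2 : ∀ x, x ≠ z → b ≤ x) {i : ℕ} :
    gad z b posn n i b = Cs n i := by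
  ext v
  rw [mem_gad, mem_Cs]
  constructor
  · rintro (h | ⟨y, hy, hyb, hyz, -⟩)
    · exact h
    · exact absurd (le_antisymm hy (hb2 y hyz)) hyb
  · exact Or.inl

lemma gad_subset_iff (hb2 : ∀ x, x ≠ z → b ≤ x)
    (hpos : ∀ y, posn y < K) (hpinj : Function.Injective posn)
    {i : ℕ} (hn : i + K + 1 ≤ n) {x y : P} (hx : x ≠ z) (hy : y ≠ z) :
    gad z b posn n i x ⊆ gad z b posn n i y ↔ x ≤ y := by
  constructor
  · intro h
    by_cases hxb : x = b
    · subst hxb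
      exact hb2 y hy
    · have hlt : i + 1 + posn x < n := by
        have := hpos x; omega
      have hv : (⟨i + 1 + posn x, hlt⟩ : Fin n) ∈ gad z b posn n i x :=
        mem_gad.mpr (Or.inr ⟨x, le_refl x, hxb, hx, rfl⟩)
      have hv' := h hv
      rw [mem_gad] at hv'
      have hval : (⟨i + 1 + posn x, hlt⟩ : Fin n).val = i + 1 + posn x := rfl
      rcases hv' with h' | ⟨y', hy'le, -, -, h'⟩
      · omega
      · have hxy' : x = y' := hpinj (by omega)
        exact hxy' ▸ hy'le
  · intro hxy v hv
    rw [mem_gad] at hv ⊢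
    rcases hv with h | ⟨y', hy'le, hy'b, hy'z, h⟩
    · exact Or.inl h
    · exact Or.inr ⟨y', le_trans hy'le hxy, hy'b, hy'z, h⟩

lemma gad_inj (hb2 : ∀ x, x ≠ z → b ≤ x)
    (hpos : ∀ y, posn y < K) (hpinj : Function.Injective posn)
    {i : ℕ} (hn : i + K + 1 ≤ n) {x y : P} (hx : x ≠ z) (hy : y ≠ z)
    (h : gad z b posn n i x = gad z b posn n i y) : x = y := by
  have h1 := (gad_subset_iff hb2 hpos hpinj hn hx hy).mp (le_of_eq h)
  have h2 := (gad_subset_iff hb2 hpos hpinj hn hy hx).mp (le_of_eq h.symm)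
  exact le_antisymm h1 h2

lemma dvd_gap {i j : ℕ} (hdi : (K+1) ∣ i) (hdj : (K+1) ∣ j) (h : i < j) :
    i + K + 1 ≤ j := by
  obtain ⟨a, rfl⟩ := hdi
  obtain ⟨c, rfl⟩ := hdj
  have hac : a < c := by
    by_contra hcon
    push_neg at hcon
    exact absurd (Nat.mul_le_mul_left (K+1) hcon) (by omega)
  have := Nat.mul_le_mul_left (K+1) (Nat.succ_le_of_lt hac)
  calc (K+1) * a + K + 1 = (K+1) * (a+1) := by ring
    _ ≤ (K+1) * c := this

/-- Bottoms of gadgets are comparable to every gadget set. -/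
lemma comp1 (hpos : ∀ y, posn y < K) {i j : ℕ}
    (hdi : (K+1) ∣ i) (hdj : (K+1) ∣ j) {x : P} :
    Cs n i ⊆ gad z b posn n j x ∨ gad z b posn n j x ⊆ Cs n i := by
  rcases le_or_gt i j with h | h
  · exact Or.inl ((Cs_mono h).trans Cs_subset_gad)
  · have hji : j + K + 1 ≤ i := dvd_gap hdj hdi h
    exact Or.inr ((gad_subset_Cs hpos).trans (Cs_mono hji))

/-- Gadget sets from different gadgets are comparable. -/
lemma comp2 (hpos : ∀ y, posn y < K) {i j : ℕ} (hij : i ≠ j)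
    (hdi : (K+1) ∣ i) (hdj : (K+1) ∣ j) {x y : P} :
    gad z b posn n i x ⊆ gad z b posn n j y ∨
      gad z b posn n j y ⊆ gad z b posn n i x := by
  rcases lt_or_gt_of_ne hij with h | h
  · have := dvd_gap hdi hdj h
    exact Or.inl (((gad_subset_Cs hpos).trans (Cs_mono this)).trans Cs_subset_gad)
  · have := dvd_gap hdj hdi h
    exact Or.inr (((gad_subset_Cs hpos).trans (Cs_mono this)).trans Cs_subset_gad)

lemma mem_F0 {S : Finset (Fin n)} :
    S ∈ F0 z b posn K n ↔
      ∃ i, ((K+1) ∣ i ∧ i + K + 1 ≤ n) ∧ ∃ x, x ≠ z ∧ S = gad z b posn n i x := by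
  unfold F0
  simp only [mem_biUnion, mem_filter, mem_range, mem_image, mem_univ, true_and]
  constructor
  · rintro ⟨i, ⟨-, hi⟩, x, hx, hgx⟩
    exact ⟨i, hi, x, hx, hgx.symm⟩
  · rintro ⟨i, hi, x, hx, rfl⟩
    exact ⟨i, ⟨by omega, hi⟩, x, hx, rfl⟩

/-- The base family contains no induced copy of `P`. -/
lemma freeF0 {t : P} (htz : t ≠ z) (hbz : b ≠ z) (hb2 : ∀ x, x ≠ z → b ≤ x)
    (hzinc : ∀ x, x ≠ z → ¬x ≤ z ∧ ¬z ≤ x)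
    (hpos : ∀ y, posn y < K) (hpinj : Function.Injective posn) :
    ¬ ContainsCopy P (F0 z b posn K n) := by
  rintro ⟨f, finj, fmem, fiff⟩
  have hinc : ∀ x, x ≠ z → ¬ f x ⊆ f z ∧ ¬ f z ⊆ f x := fun x hx =>
    ⟨fun h => (hzinc x hx).1 ((fiff x z).mpr h),
     fun h => (hzinc x hx).2 ((fiff z x).mpr h)⟩
  obtain ⟨i₀, hi₀, x₀, hx₀z, hfz⟩ := mem_F0.mp (fmem z)
  by_cases hx₀b : x₀ = b
  · -- the image of `z` is a gadget bottom: comparable with everything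
    rw [hx₀b, gad_b hb2] at hfz
    obtain ⟨j, hj, y, hyz, hft⟩ := mem_F0.mp (fmem t)
    rcases comp1 (z := z) (b := b) (posn := posn) hpos hi₀.1 hj.1 (x := y) with h | h
    · exact (hinc t htz).2 (by rw [hfz, hft]; exact h)
    · exact (hinc t htz).1 (by rw [hfz, hft]; exact h)
  · -- the image of `z` is a middle of gadget `i₀`
    have key : ∀ x : P, ∃ y : P,
        x ≠ z → (y ≠ z ∧ y ≠ b ∧ y ≠ x₀ ∧ f x = gad z b posn n i₀ y) := by
      intro x
      by_cases hx : x = z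
      · exact ⟨b, fun h => absurd hx h⟩
      · obtain ⟨j, hj, y, hyz, hfx⟩ := mem_F0.mp (fmem x)
        refine ⟨y, fun _ => ?_⟩
        have hyb : y ≠ b := by
          intro hyb
          rw [hyb, gad_b hb2] at hfx
          rcases comp1 (z := z) (b := b) (posn := posn) hpos hj.1 hi₀.1 (x := x₀)
            with h | h
          · exact (hinc x hx).1 (by rw [hfx, hfz]; exact h)
          · exact (hinc x hx).2 (by rw [hfx, hfz]; exact h)
        have hji : j = i₀ := by
          by_contra hne
          rcases comp2 (z := z) (b := b) (posn := posn) hpos hne hj.1 hi₀.1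
            (x := y) (y := x₀) with h | h
          · exact (hinc x hx).1 (by rw [hfx, hfz]; exact h)
          · exact (hinc x hx).2 (by rw [hfx, hfz]; exact h)
        subst hji
        have hyx₀ : y ≠ x₀ := by
          rintro rfl
          exact (hinc x hx).1 (by rw [hfx, hfz])
        exact ⟨hyz, hyb, hyx₀, hfx⟩
    choose ψ hψ using key
    have hcard : (univ.erase z).card ≤ (((univ.erase z).erase b).erase x₀).card := by
      apply Finset.card_le_card_of_injOn ψ
      · intro x hx
        have hxz : x ≠ z := (mem_erase.mp hx).1
        obtain ⟨h1, h2, h3, -⟩ := hψ x hxz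
        exact mem_erase.mpr ⟨h3, mem_erase.mpr ⟨h2, mem_erase.mpr ⟨h1, mem_univ _⟩⟩⟩
      · intro x hx x' hx' h
        have hxz : x ≠ z := (mem_erase.mp (Finset.mem_coe.mp hx)).1
        have hx'z : x' ≠ z := (mem_erase.mp (Finset.mem_coe.mp hx')).1
        apply finj
        rw [(hψ x hxz).2.2.2, (hψ x' hx'z).2.2.2, h]
    have hbmem : b ∈ univ.erase z := mem_erase.mpr ⟨hbz, mem_univ b⟩
    have hx₀mem : x₀ ∈ (univ.erase z).erase b :=
      mem_erase.mpr ⟨hx₀b, mem_erase.mpr ⟨hx₀z, mem_univ _⟩⟩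
    rw [card_erase_of_mem hx₀mem, card_erase_of_mem hbmem,
      card_erase_of_mem (mem_univ z), card_univ] at hcard
    have h2 : 2 ≤ Fintype.card P := Fintype.one_lt_card_iff_nontrivial.mpr ⟨⟨t, z, htz⟩⟩
    omega

/-- If `S` lies in `𝒜` together with all gadgets, and `S` is covered,
then `𝒜` contains a copy of `P`. -/
lemma copy_of_covered (hb2 : ∀ x, x ≠ z → b ≤ x)
    (hzinc : ∀ x, x ≠ z → ¬x ≤ z ∧ ¬z ≤ x)
    (hpos : ∀ y, posn y < K) (hpinj : Function.Injective posn)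
    {𝒜 : Finset (Finset (Fin n))}
    (hgads : ∀ i x, ((K+1) ∣ i ∧ i + K + 1 ≤ n) → x ≠ z → gad z b posn n i x ∈ 𝒜)
    {S : Finset (Fin n)} (hS : S ∈ 𝒜) (hcov : Covered K n S) :
    ContainsCopy P 𝒜 := by
  obtain ⟨i, hi, ⟨p, hpS, hpi⟩, ⟨q, hqS, hq⟩⟩ := hcov
  have hxsub : ∀ x : P, ¬ gad z b posn n i x ⊆ S := by
    intro x h
    exact hpS (h (Cs_subset_gad (mem_Cs.mpr hpi)))
  have hSsub : ∀ x : P, ¬ S ⊆ gad z b posn n i x := by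
    intro x h
    have := mem_Cs.mp (gad_subset_Cs hpos (h hqS))
    omega
  refine ⟨fun x => if x = z then S else gad z b posn n i x, ?_, ?_, ?_⟩
  · intro a a' h
    dsimp only at h
    by_cases ha : a = z
    · by_cases ha' : a' = z
      · rw [ha, ha']
      · rw [if_pos ha, if_neg ha'] at h
        exact absurd (le_of_eq h.symm) (hxsub a')
    · by_cases ha' : a' = z
      · rw [if_neg ha, if_pos ha'] at h
        exact absurd (le_of_eq h) (hxsub a)
      · rw [if_neg ha, if_neg ha'] at h
        exact gad_inj hb2 hpos hpinj hi.2 ha ha' h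
  · intro a
    dsimp only
    by_cases ha : a = z
    · rw [if_pos ha]; exact hS
    · rw [if_neg ha]; exact hgads i a hi ha
  · intro a a'
    dsimp only
    by_cases ha : a = z
    · by_cases ha' : a' = z
      · rw [if_pos ha, if_pos ha', ha, ha']
        exact iff_of_true (le_refl z) (Finset.Subset.refl S)
      · rw [if_pos ha, if_neg ha', ha]
        exact iff_of_false (hzinc a' ha').2 (hSsub a')
    · by_cases ha' : a' = z
      · rw [if_neg ha, if_pos ha', ha']
        exact iff_of_false (hzinc a ha).1 (hxsub a)
      · rw [if_neg ha, if_neg ha']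
        exact (gad_subset_iff hb2 hpos hpinj hi.2 ha ha').symm

/-- Any set which is not covered has small bandwidth. -/
lemma of_not_covered {S : Finset (Fin n)} (h : ¬ Covered K n S) :
    ∃ a ≤ n, Cs n a ⊆ S ∧ S ⊆ Cs n (a + (2*K+4)) := by
  by_cases hu : (univ : Finset (Fin n)) ⊆ S
  · refine ⟨n, le_refl n, fun v _ => hu (mem_univ v), ?_⟩
    rw [Cs_univ (by omega)]
    exact subset_univ S
  · have hne : (univ \ S).Nonempty := sdiff_nonempty.mpr hu
    set lam := (univ \ S).min' hne with hlamdef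
    have hlam : lam ∉ S := (mem_sdiff.mp ((univ \ S).min'_mem hne)).2
    have hCs : Cs n lam.val ⊆ S := by
      intro v hv
      rw [mem_Cs] at hv
      by_contra hvS
      have hle : lam ≤ v := min'_le _ v (mem_sdiff.mpr ⟨mem_univ v, hvS⟩)
      rw [Fin.le_def] at hle
      omega
    refine ⟨lam.val, le_of_lt lam.isLt, hCs, ?_⟩
    by_contra hsub
    obtain ⟨q, hqS, hq⟩ := not_subset.mp hsub
    rw [mem_Cs] at hq
    push_neg at hq
    apply h
    have hKpos : 0 < K + 1 := Nat.succ_pos K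
    set i := (K+1) * ((lam.val + 1 + K) / (K+1)) with hidef
    have hdm := Nat.div_add_mod (lam.val + 1 + K) (K+1)
    have hm : (lam.val + 1 + K) % (K+1) < K+1 := Nat.mod_lt _ hKpos
    have hi1 : lam.val + 1 ≤ i ∧ i ≤ lam.val + 1 + K := by
      constructor <;> omega
    have hqn : q.val < n := q.isLt
    exact ⟨i, ⟨Dvd.intro _ rfl, by omega⟩, ⟨lam, hlam, by omega⟩, ⟨q, hqS, by omega⟩⟩

lemma mem_Small {S : Finset (Fin n)} {a : ℕ} (ha : a ≤ n)
    (h1 : Cs n a ⊆ S) (h2 : S ⊆ Cs n (a + (2*K+4))) : S ∈ Small K n := by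
  rw [Small, mem_biUnion]
  refine ⟨a, mem_range.mpr (by omega), mem_image.mpr ⟨S \ Cs n a, ?_, ?_⟩⟩
  · exact mem_powerset.mpr (sdiff_subset_sdiff h2 (Finset.Subset.refl _))
  · exact union_sdiff_of_subset h1

lemma Small_card : (Small K n).card ≤ (n+1) * 2^(2*K+4) := by
  refine le_trans card_biUnion_le ?_
  have hbound : ∀ a ∈ range (n+1),
      (((Cs n (a + (2*K+4))) \ (Cs n a)).powerset.image
        (fun E => Cs n a ∪ E)).card ≤ 2^(2*K+4) := by
    intro a _
    refine le_trans card_image_le ?_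
    rw [card_powerset]
    apply Nat.pow_le_pow_right (by omega)
    -- card of the sdiff is at most 2*K+4
    have : ((Cs n (a + (2*K+4))) \ (Cs n a)).card ≤ (range (2*K+4)).card := by
      apply Finset.card_le_card_of_injOn (fun v => v.val - a)
      · intro v hv
        rw [Finset.mem_coe, Finset.mem_sdiff, mem_Cs, mem_Cs] at hv
        simp only [Finset.mem_coe, mem_range]
        omega
      · intro v hv w hw hvw
        rw [Finset.mem_coe, Finset.mem_sdiff, mem_Cs, mem_Cs] at hv hw
        dsimp only at hvw
        exact Fin.ext (by omega)
    rwa [card_range] at this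
  calc ∑ a ∈ range (n+1), (((Cs n (a + (2*K+4))) \ (Cs n a)).powerset.image
        (fun E => Cs n a ∪ E)).card
      ≤ ∑ _a ∈ range (n+1), 2^(2*K+4) := Finset.sum_le_sum hbound
    _ = (n+1) * 2^(2*K+4) := by rw [Finset.sum_const, card_range, smul_eq_mul]

end Lemmas

end Statement6Aux

open Statement6Aux in
/-- If `P` is a special poset then `sat*(n, P) = O(n)`: there is a
constant `C` with `sat*(n, P) ≤ C * n` for all sufficiently large `n`. -/
theorem statement6 (P : Type*) [PartialOrder P] [Fintype P] (hP : IsSpecial P) :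
    ∃ C N : ℕ, ∀ n ≥ N, satStar P n ≤ C * n := by
  classical
  obtain ⟨z, hz, ⟨t, htz, ht⟩, ⟨b, hbz, hb⟩⟩ := hP
  set K := Fintype.card P with hKdef
  set posn : P → ℕ := fun y => (Fintype.equivFin P y).val with hposndef
  have hpos : ∀ y, posn y < K := fun y => (Fintype.equivFin P y).isLt
  have hpinj : Function.Injective posn := fun x y h =>
    (Fintype.equivFin P).injective (Fin.ext h)
  refine ⟨2^(2*K+5), 1, fun n hn => ?_⟩
  -- take a maximum-size P-free family containing F0
  set 𝒮 := (univ : Finset (Finset (Finset (Fin n)))).filter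
    (fun F => F0 z b posn K n ⊆ F ∧ ¬ ContainsCopy P F) with h𝒮def
  have hF0mem : F0 z b posn K n ∈ 𝒮 := by
    rw [h𝒮def, mem_filter]
    exact ⟨mem_univ _, Finset.Subset.refl _, freeF0 htz hbz hb hz hpos hpinj⟩
  obtain ⟨F, hFS, hFmax⟩ := 𝒮.exists_max_image Finset.card ⟨_, hF0mem⟩
  rw [h𝒮def, mem_filter] at hFS
  obtain ⟨-, hF0F, hFfree⟩ := hFS
  have hsat : IsSaturatedFamily P F := by
    refine ⟨hFfree, fun S hS => ?_⟩
    by_contra hnc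
    have hmem : insert S F ∈ 𝒮 := by
      rw [h𝒮def, mem_filter]
      exact ⟨mem_univ _, hF0F.trans (subset_insert _ _), hnc⟩
    have hle := hFmax _ hmem
    rw [card_insert_of_notMem hS] at hle
    omega
  have h1 : satStar P n ≤ F.card := Nat.sInf_le ⟨F, hsat, rfl⟩
  have hFsmall : F ⊆ Small K n := by
    intro S hSF
    have hnc : ¬ Covered K n S := by
      intro hcov
      apply hFfree
      refine copy_of_covered hb hz hpos hpinj
        (fun i x hi hx => hF0F (mem_F0.mpr ⟨i, hi, x, hx, rfl⟩)) hSF hcov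
    obtain ⟨a, ha, hs1, hs2⟩ := of_not_covered hnc
    exact mem_Small ha hs1 hs2
  have h2 : F.card ≤ (n+1) * 2^(2*K+4) :=
    le_trans (card_le_card hFsmall) Small_card
  have h3 : (n+1) * 2^(2*K+4) ≤ 2^(2*K+5) * n := by
    have hshow : (2:ℕ)^(2*K+5) = 2^(2*K+4) * 2 := by
      rw [show 2*K+5 = (2*K+4)+1 by omega, pow_succ]
    calc (n+1) * 2^(2*K+4) ≤ (2*n) * 2^(2*K+4) :=
          Nat.mul_le_mul_right _ (by omega)
      _ = 2^(2*K+5) * n := by rw [hshow]; ring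
  omega
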